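/- For every finite simple graph G, the critical difference equals the critical independence difference; that is, the maximum of |X| − |N_G(X)| over all subsets X ⊆ V(G) equals the maximum of |I| − |N_G(I)| over all independent subsets I ⊆ V(G). -/

import Mathlib

private lemma ncard_diff_inter' {V : Type*} [Fintype V] (s t : Set V) :
    (s \ t).ncard + (s ∩ t).ncard = s.ncard := by
  have h := Set.encard_diff_add_encard_inter s t
  have hfin : s.Finite := Set.toFinite s
  rw [Set.ncard, Set.ncard, Set.ncard, ← h, ENat.toNat_add]
  · exact ((hfin.diff).encard_lt_top).ne
  · exact ((hfin.inter_of_left _).encard_lt_top).ne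

theorem stmt_6 {V : Type*} [Fintype V] (G : SimpleGraph V) :
    sSup {d : ℤ | ∃ X : Set V,
        d = (X.ncard : ℤ) - ({u : V | ∃ v ∈ X, G.Adj v u}.ncard : ℤ)} =
      sSup {d : ℤ | ∃ I : Set V, (∀ u ∈ I, ∀ v ∈ I, ¬ G.Adj u v) ∧
        d = (I.ncard : ℤ) - ({u : V | ∃ v ∈ I, G.Adj v u}.ncard : ℤ)} := by
  set A := {d : ℤ | ∃ X : Set V,
      d = (X.ncard : ℤ) - ({u : V | ∃ v ∈ X, G.Adj v u}.ncard : ℤ)} with hA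
  set B := {d : ℤ | ∃ I : Set V, (∀ u ∈ I, ∀ v ∈ I, ¬ G.Adj u v) ∧
      d = (I.ncard : ℤ) - ({u : V | ∃ v ∈ I, G.Adj v u}.ncard : ℤ)} with hB
  have hBA : B ⊆ A := by
    rintro d ⟨I, _, hd⟩; exact ⟨I, hd⟩
  have hbddA : BddAbove A := by
    refine ⟨(Fintype.card V : ℤ), ?_⟩
    rintro d ⟨X, rfl⟩
    have h1 : X.ncard ≤ Fintype.card V := Set.ncard_le_ncard (Set.subset_univ X)
      |>.trans_eq (by simp [Set.ncard_univ])
    have h2 : (0 : ℤ) ≤ ({u : V | ∃ v ∈ X, G.Adj v u}.ncard : ℤ) := by positivity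
    omega
  have hbddB : BddAbove B := hbddA.mono hBA
  have hneB : B.Nonempty := ⟨0, ∅, by simp⟩
  have hneA : A.Nonempty := hneB.mono hBA
  refine le_antisymm ?_ (csSup_le_csSup hbddA hneB hBA)
  refine csSup_le hneA ?_
  rintro d ⟨X, rfl⟩
  set N := {u : V | ∃ v ∈ X, G.Adj v u} with hN
  set I := X \ N with hI
  set NI := {u : V | ∃ v ∈ I, G.Adj v u} with hNI
  have hIind : ∀ u ∈ I, ∀ v ∈ I, ¬ G.Adj u v := by
    rintro u ⟨huX, huN⟩ v ⟨hvX, hvN⟩ hadj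
    exact hvN ⟨u, huX, hadj⟩
  have hNIsub : NI ⊆ N \ X := by
    rintro w ⟨v, ⟨hvX, hvN⟩, hadj⟩
    refine ⟨⟨v, hvX, hadj⟩, fun hwX => hvN ⟨w, hwX, hadj.symm⟩⟩
  have h1 : I.ncard + (X ∩ N).ncard = X.ncard := ncard_diff_inter' X N
  have h2 : (N \ X).ncard + (N ∩ X).ncard = N.ncard := ncard_diff_inter' N X
  have h3 : (N ∩ X).ncard = (X ∩ N).ncard := by rw [Set.inter_comm]
  have h4 : NI.ncard ≤ (N \ X).ncard := Set.ncard_le_ncard hNIsub (Set.toFinite _)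
  have key : (X.ncard : ℤ) - (N.ncard : ℤ) ≤ (I.ncard : ℤ) - (NI.ncard : ℤ) := by omega
  calc (X.ncard : ℤ) - (N.ncard : ℤ) ≤ (I.ncard : ℤ) - (NI.ncard : ℤ) := key
    _ ≤ sSup B := le_csSup hbddB ⟨I, hIind, rfl⟩
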